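/- Let d ≥ 1 and n ≥ 0 be integers, and let f, g ∈ ℂ[X₀, …, Xₙ] be homogeneous polynomials of degree d. Define the Bombieri–Weyl Hermitian inner product ⟨f, g⟩ = Σ_{|α|=d} binom(d, α)^{−1} · f_α · conj(g_α), where f = Σ_{|α|=d} f_α X^α, g = Σ_{|α|=d} g_α X^α, and binom(d, α) = d!/(α₀!·⋯·αₙ!) is the multinomial coefficient. Then for every unitary matrix ν ∈ U(n+1), one has ⟨f∘ν, g∘ν⟩ = ⟨f, g⟩, where (f∘ν)(x) := f(νx) is the polynomial obtained by the linear substitution Xⱼ ↦ Σ_k ν_{jk} X_k. -/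

import Mathlib

open MvPolynomial

/-- The Bombieri–Weyl Hermitian inner product of two homogeneous polynomials of degree `d`:
`⟨f, g⟩ = Σ_{|α|=d} binom(d,α)⁻¹ f_α conj(g_α)` (the sum may be taken over the support
of `f`, since all other terms vanish). -/
noncomputable def bombieriWeyl {n : ℕ} (f g : MvPolynomial (Fin (n + 1)) ℂ) : ℂ :=
  ∑ α ∈ f.support,
    ((Nat.multinomial Finset.univ fun k => α k : ℕ) : ℂ)⁻¹ *
      (f.coeff α * starRingEnd ℂ (g.coeff α))

/-- Composition of a polynomial with a linear substitution given by the matrix `ν`,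
i.e. `(f ∘ ν)(x) = f(νx)`: each variable `Xⱼ` is replaced by `Σ_k ν_{jk} X_k`. -/
noncomputable def compMatrix {n : ℕ} (ν : Matrix (Fin (n + 1)) (Fin (n + 1)) ℂ)
    (f : MvPolynomial (Fin (n + 1)) ℂ) : MvPolynomial (Fin (n + 1)) ℂ :=
  aeval (fun j => ∑ k, ν j k • (X k : MvPolynomial (Fin (n + 1)) ℂ)) f

namespace BWproof

variable {n : ℕ}

noncomputable def factC (α : Fin (n + 1) →₀ ℕ) : ℂ := ∏ i, (Nat.factorial (α i) : ℂ)

noncomputable def pairB (f h : MvPolynomial (Fin (n + 1)) ℂ) : ℂ :=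
  Finsupp.sum (AddMonoidAlgebra.coeff f) fun α c => (h.coeff α * factC α) * c

lemma factC_zero : factC (0 : Fin (n + 1) →₀ ℕ) = 1 := by
  simp [factC]

lemma factC_add_single (β : Fin (n + 1) →₀ ℕ) (k : Fin (n + 1)) :
    factC (β + Finsupp.single k 1) = ((β k : ℂ) + 1) * factC β := by
  unfold factC
  rw [← Finset.mul_prod_erase Finset.univ _ (Finset.mem_univ k),
      ← Finset.mul_prod_erase Finset.univ (fun i => (Nat.factorial (β i) : ℂ)) (Finset.mem_univ k)]
  have h1 : ∀ i ∈ Finset.univ.erase k,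
      (Nat.factorial ((β + Finsupp.single k 1 : Fin (n + 1) →₀ ℕ) i) : ℂ) = (Nat.factorial (β i) : ℂ) := by
    intro i hi
    rw [Finsupp.add_apply, Finsupp.single_apply,
      if_neg (Finset.ne_of_mem_erase hi).symm, add_zero]
  rw [Finset.prod_congr rfl h1]
  have h2 : (β + Finsupp.single k 1 : Fin (n + 1) →₀ ℕ) k = β k + 1 := by simp
  rw [h2, Nat.factorial_succ]
  push_cast
  ring

lemma pairB_monomial (β : Fin (n + 1) →₀ ℕ) (c : ℂ) (h : MvPolynomial (Fin (n + 1)) ℂ) :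
    pairB (monomial β c) h = (h.coeff β * factC β) * c := by
  unfold pairB
  rw [sum_monomial_eq]
  rw [mul_zero]

lemma pairB_add_left (f₁ f₂ h : MvPolynomial (Fin (n + 1)) ℂ) :
    pairB (f₁ + f₂) h = pairB f₁ h + pairB f₂ h := by
  unfold pairB
  exact Finsupp.sum_add_index' (fun a => mul_zero _) (fun a b₁ b₂ => mul_add _ _ _)

lemma pairB_smul_left (c : ℂ) (f h : MvPolynomial (Fin (n + 1)) ℂ) :
    pairB (c • f) h = c * pairB f h := by
  unfold pairB
  rw [show AddMonoidAlgebra.coeff (c • f) = c • AddMonoidAlgebra.coeff f from rfl]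
  rw [Finsupp.sum_smul_index' (fun a => mul_zero _)]
  rw [Finsupp.mul_sum]
  refine Finset.sum_congr rfl fun α _ => ?_
  simp only [smul_eq_mul]
  ring

lemma pairB_sum_left {ι : Type*} (s : Finset ι) (f : ι → MvPolynomial (Fin (n + 1)) ℂ)
    (h : MvPolynomial (Fin (n + 1)) ℂ) :
    pairB (∑ i ∈ s, f i) h = ∑ i ∈ s, pairB (f i) h := by
  classical
  induction s using Finset.induction_on with
  | empty => simp [pairB]
  | insert _ _ hi ih => rw [Finset.sum_insert hi, pairB_add_left, ih, Finset.sum_insert hi]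

lemma pairB_smul_right (c : ℂ) (f h : MvPolynomial (Fin (n + 1)) ℂ) :
    pairB f (c • h) = c * pairB f h := by
  unfold pairB Finsupp.sum
  rw [Finset.mul_sum]
  refine Finset.sum_congr rfl fun α _ => ?_
  simp only [MvPolynomial.coeff_smul, smul_eq_mul]
  ring

lemma pairB_sum_right {ι : Type*} (s : Finset ι) (f : MvPolynomial (Fin (n + 1)) ℂ)
    (h : ι → MvPolynomial (Fin (n + 1)) ℂ) :
    pairB f (∑ i ∈ s, h i) = ∑ i ∈ s, pairB f (h i) := by
  unfold pairB Finsupp.sum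
  rw [Finset.sum_comm]
  refine Finset.sum_congr rfl fun α _ => ?_
  simp only [MvPolynomial.coeff_sum, Finset.sum_mul]

lemma coeff_pderiv (k : Fin (n + 1)) (h : MvPolynomial (Fin (n + 1)) ℂ) (β : Fin (n + 1) →₀ ℕ) :
    (pderiv k h).coeff β = ((β k : ℂ) + 1) * h.coeff (β + Finsupp.single k 1) := by
  induction h using MvPolynomial.induction_on' with
  | add p q hp hq => simp only [map_add, MvPolynomial.coeff_add, hp, hq]; ring
  | monomial γ a =>
    rw [pderiv_monomial, coeff_monomial, coeff_monomial]
    by_cases hk : γ k = 0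
    · have hne : ¬ γ = β + Finsupp.single k 1 := by
        intro hc
        have : γ k = β k + 1 := by rw [hc]; simp
        omega
      rw [if_neg hne, hk, mul_zero]
      by_cases hc2 : γ - Finsupp.single k 1 = β <;> simp [hc2]
    · have hle : Finsupp.single k 1 ≤ γ := by
        rw [Finsupp.single_le_iff]
        omega
      by_cases hc : γ = β + Finsupp.single k 1
      · rw [if_pos, if_pos hc]
        · subst hc
          have h3 : (β + Finsupp.single k 1 : Fin (n + 1) →₀ ℕ) k = β k + 1 := by simp
          rw [h3]
          push_cast
          ring
        · subst hc
          exact add_tsub_cancel_right β (Finsupp.single k 1)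
      · rw [if_neg hc, if_neg, mul_zero]
        intro hc2
        apply hc
        rw [← hc2, tsub_add_cancel_of_le hle]

lemma pairB_mul_X (f h : MvPolynomial (Fin (n + 1)) ℂ) (k : Fin (n + 1)) :
    pairB (f * X k) h = pairB f (pderiv k h) := by
  induction f using MvPolynomial.induction_on' with
  | add p q hp hq => rw [add_mul, pairB_add_left, hp, hq, pairB_add_left]
  | monomial β c =>
    have hX : (monomial β c : MvPolynomial (Fin (n + 1)) ℂ) * X k
        = monomial (β + Finsupp.single k 1) c := by
      rw [X, monomial_mul, mul_one]
    rw [hX, pairB_monomial, pairB_monomial, coeff_pderiv, factC_add_single]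
    ring

-- chain rule
lemma pderiv_aeval (s : Fin (n + 1) → MvPolynomial (Fin (n + 1)) ℂ) (k : Fin (n + 1))
    (h : MvPolynomial (Fin (n + 1)) ℂ) :
    pderiv k (aeval s h) = ∑ j, aeval s (pderiv j h) * pderiv k (s j) := by
  induction h using MvPolynomial.induction_on with
  | C a => simp
  | add p q hp hq =>
    simp only [map_add, hp, hq, add_mul, Finset.sum_add_distrib]
  | mul_X p i hp =>
    rw [map_mul, aeval_X, pderiv_mul, hp]
    have key : ∀ j : Fin (n + 1), aeval s (pderiv j (p * X i)) * pderiv k (s j)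
        = (aeval s (pderiv j p) * pderiv k (s j)) * s i
          + (if j = i then aeval s p * pderiv k (s i) else 0) := by
      intro j
      rw [pderiv_mul]
      by_cases hji : j = i
      · subst hji
        simp only [pderiv_X_self, mul_one, map_add, map_mul, aeval_X, add_mul, eq_self_iff_true, if_true]
        ring
      · rw [pderiv_X_of_ne (Ne.symm hji), if_neg hji, mul_zero, add_zero, map_mul, aeval_X]
        ring
    rw [Finset.sum_congr rfl fun j _ => key j, Finset.sum_add_distrib, ← Finset.sum_mul]
    simp

lemma constantCoeff_compMatrix (μ : Matrix (Fin (n + 1)) (Fin (n + 1)) ℂ)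
    (h : MvPolynomial (Fin (n + 1)) ℂ) :
    constantCoeff (compMatrix μ h) = constantCoeff h := by
  induction h using MvPolynomial.induction_on with
  | C a => simp [compMatrix]
  | add p q hp hq => simp only [compMatrix, map_add] at *; rw [hp, hq]
  | mul_X p i hp =>
    simp only [compMatrix, map_mul, aeval_X] at *
    rw [hp]
    simp

lemma map_conj_compMatrix (ν : Matrix (Fin (n + 1)) (Fin (n + 1)) ℂ)
    (g : MvPolynomial (Fin (n + 1)) ℂ) :
    map (starRingEnd ℂ) (compMatrix ν g)
      = compMatrix (ν.map (starRingEnd ℂ)) (map (starRingEnd ℂ) g) := by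
  induction g using MvPolynomial.induction_on with
  | C a => simp [compMatrix]
  | add p q hp hq => simp only [compMatrix, map_add] at *; rw [hp, hq]
  | mul_X p i hp =>
    simp only [compMatrix, map_mul, map_X, aeval_X] at *
    rw [hp]
    congr 1
    simp [smul_eq_C_mul, Matrix.map_apply]

lemma unitary_entry (ν : Matrix (Fin (n + 1)) (Fin (n + 1)) ℂ)
    (hν : ν ∈ Matrix.unitaryGroup (Fin (n + 1)) ℂ) (i j : Fin (n + 1)) :
    ∑ k, ν i k * starRingEnd ℂ (ν j k) = if i = j then 1 else 0 := by
  have h1 : ν * star ν = 1 := Matrix.mem_unitaryGroup_iff.mp hν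
  have h2 := congrFun (congrFun h1 i) j
  rw [Matrix.mul_apply] at h2
  simp only [Matrix.star_apply, Matrix.one_apply] at h2
  convert h2 using 2
  rfl

lemma sum_smul_pderiv_comp (ν : Matrix (Fin (n + 1)) (Fin (n + 1)) ℂ)
    (hν : ν ∈ Matrix.unitaryGroup (Fin (n + 1)) ℂ) (h : MvPolynomial (Fin (n + 1)) ℂ)
    (i : Fin (n + 1)) :
    ∑ k, ν i k • pderiv k (compMatrix (ν.map (starRingEnd ℂ)) h)
      = compMatrix (ν.map (starRingEnd ℂ)) (pderiv i h) := by
  set μ := ν.map (starRingEnd ℂ) with hμ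
  set s : Fin (n + 1) → MvPolynomial (Fin (n + 1)) ℂ := fun j => ∑ k, μ j k • X k with hs
  have hsp : ∀ j k, pderiv k (s j) = C (μ j k) := by
    intro j k
    rw [hs]
    rw [map_sum]
    rw [Finset.sum_eq_single k]
    · rw [Derivation.map_smul, pderiv_X_self, smul_eq_C_mul, mul_one]
    · intro b _ hbk
      rw [Derivation.map_smul, pderiv_X_of_ne hbk, smul_zero]
    · simp
  have e1 : ∀ k, pderiv k (compMatrix μ h) = ∑ j, aeval s (pderiv j h) * C (μ j k) := by
    intro k
    rw [show compMatrix μ h = aeval s h from rfl, pderiv_aeval]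
    exact Finset.sum_congr rfl fun j _ => by rw [hsp]
  calc ∑ k, ν i k • pderiv k (compMatrix μ h)
      = ∑ k, ∑ j, aeval s (pderiv j h) * (C (ν i k) * C (μ j k)) := by
        refine Finset.sum_congr rfl fun k _ => ?_
        rw [e1, Finset.smul_sum]
        refine Finset.sum_congr rfl fun j _ => ?_
        rw [smul_eq_C_mul]
        ring
    _ = ∑ j, aeval s (pderiv j h) * C (∑ k, ν i k * μ j k) := by
        rw [Finset.sum_comm]
        refine Finset.sum_congr rfl fun j _ => ?_
        rw [← Finset.mul_sum]
        congr 1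
        rw [map_sum C (fun k => ν i k * μ j k) Finset.univ]
        exact Finset.sum_congr rfl fun k _ => (map_mul C _ _).symm
    _ = compMatrix μ (pderiv i h) := by
        have : ∀ j, (∑ k, ν i k * μ j k) = if i = j then 1 else 0 := by
          intro j
          rw [← unitary_entry ν hν i j]
          exact Finset.sum_congr rfl fun k _ => by rw [hμ]; rfl
        rw [Finset.sum_congr rfl fun j _ => by rw [this j]]
        rw [Finset.sum_eq_single i]
        · rw [if_pos rfl, map_one, mul_one]
          rfl
        · intro b _ hbi
          rw [if_neg (Ne.symm hbi), map_zero, mul_zero]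
        · simp

lemma pairB_comp (ν : Matrix (Fin (n + 1)) (Fin (n + 1)) ℂ)
    (hν : ν ∈ Matrix.unitaryGroup (Fin (n + 1)) ℂ) (f : MvPolynomial (Fin (n + 1)) ℂ) :
    ∀ h : MvPolynomial (Fin (n + 1)) ℂ,
      pairB (compMatrix ν f) (compMatrix (ν.map (starRingEnd ℂ)) h) = pairB f h := by
  induction f using MvPolynomial.induction_on with
  | C a =>
    intro h
    have e1 : compMatrix ν (C a) = C a := by simp [compMatrix]
    have e2 : (C a : MvPolynomial (Fin (n + 1)) ℂ) = monomial 0 a := by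
      rw [C_apply]
    rw [e1, e2, pairB_monomial, pairB_monomial, factC_zero]
    have e3 : (compMatrix (ν.map (starRingEnd ℂ)) h).coeff 0 = h.coeff 0 := by
      rw [← constantCoeff_eq]
      exact constantCoeff_compMatrix _ h
    rw [e3]
  | add p q hp hq =>
    intro h
    have e1 : compMatrix ν (p + q) = compMatrix ν p + compMatrix ν q := map_add _ _ _
    rw [e1, pairB_add_left, hp, hq, pairB_add_left]
  | mul_X p i hp =>
    intro h
    have e1 : compMatrix ν (p * X i) = ∑ k, ν i k • (compMatrix ν p * X k) := by
      show aeval _ (p * X i) = _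
      rw [map_mul, aeval_X, Finset.mul_sum]
      exact Finset.sum_congr rfl fun k _ => (mul_smul_comm _ _ _)
    rw [e1, pairB_sum_left]
    have e2 : ∀ k, pairB (ν i k • (compMatrix ν p * X k)) (compMatrix (ν.map (starRingEnd ℂ)) h)
        = ν i k * pairB (compMatrix ν p) (pderiv k (compMatrix (ν.map (starRingEnd ℂ)) h)) := by
      intro k
      rw [pairB_smul_left, pairB_mul_X]
    rw [Finset.sum_congr rfl fun k _ => e2 k]
    have e3 : ∑ k, ν i k * pairB (compMatrix ν p) (pderiv k (compMatrix (ν.map (starRingEnd ℂ)) h))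
        = pairB (compMatrix ν p) (∑ k, ν i k • pderiv k (compMatrix (ν.map (starRingEnd ℂ)) h)) := by
      rw [pairB_sum_right]
      exact Finset.sum_congr rfl fun k _ => (pairB_smul_right _ _ _).symm
    rw [e3, sum_smul_pderiv_comp ν hν h i, hp (pderiv i h), ← pairB_mul_X]

lemma sum_eq_degree (α : Fin (n + 1) →₀ ℕ) : ∑ i, α i = α.degree := by
  rw [Finsupp.degree]
  exact (Finset.sum_subset (Finset.subset_univ _) fun i _ hi =>
    Finsupp.notMem_support_iff.mp hi).symm

lemma bombieriWeyl_eq_pairB (d : ℕ) (f g : MvPolynomial (Fin (n + 1)) ℂ)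
    (hf : f.IsHomogeneous d) :
    bombieriWeyl f g = ((Nat.factorial d : ℂ))⁻¹ * pairB f (map (starRingEnd ℂ) g) := by
  unfold bombieriWeyl pairB
  rw [Finsupp.sum, Finset.mul_sum]
  refine Finset.sum_congr rfl fun α hα => ?_
  have hdeg : α.degree = d := by
    by_contra hne
    exact (MvPolynomial.mem_support_iff.mp hα) (hf.coeff_eq_zero hne)
  have hsum : ∑ i, α i = d := by rw [sum_eq_degree, hdeg]
  have hspec : (∏ i, Nat.factorial (α i)) * Nat.multinomial Finset.univ (fun k => α k)
      = Nat.factorial d := by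
    rw [Nat.multinomial_spec, hsum]
  have hspecC : factC α * ((Nat.multinomial Finset.univ fun k => α k : ℕ) : ℂ)
      = (Nat.factorial d : ℂ) := by
    rw [factC, ← Nat.cast_prod, ← Nat.cast_mul, hspec]
  have h1 : ((Nat.multinomial Finset.univ fun k => α k : ℕ) : ℂ) ≠ 0 :=
    Nat.cast_ne_zero.mpr (Nat.multinomial_pos _ _).ne'
  have h2 : ((Nat.factorial d : ℕ) : ℂ) ≠ 0 :=
    Nat.cast_ne_zero.mpr (Nat.factorial_pos d).ne'
  have hcoeff : (map (starRingEnd ℂ) g).coeff α = starRingEnd ℂ (g.coeff α) :=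
    MvPolynomial.coeff_map _ _ _
  have hfact : factC α = (Nat.factorial d : ℂ) * ((Nat.multinomial Finset.univ fun k => α k : ℕ) : ℂ)⁻¹ :=
    (eq_mul_inv_iff_mul_eq₀ h1).mpr hspecC
  show ((Nat.multinomial Finset.univ fun k => α k : ℕ) : ℂ)⁻¹ *
      (f.coeff α * starRingEnd ℂ (g.coeff α))
    = (Nat.factorial d : ℂ)⁻¹ * (((map (starRingEnd ℂ) g).coeff α * factC α) * f.coeff α)
  rw [hcoeff, hfact]
  field_simp

lemma compMatrix_isHomogeneous (ν : Matrix (Fin (n + 1)) (Fin (n + 1)) ℂ) (d : ℕ)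
    (f : MvPolynomial (Fin (n + 1)) ℂ) (hf : f.IsHomogeneous d) :
    (compMatrix ν f).IsHomogeneous d := by
  have h1 : ∀ j, ((∑ k, ν j k • X k : MvPolynomial (Fin (n + 1)) ℂ)).IsHomogeneous 1 := by
    intro j
    apply MvPolynomial.IsHomogeneous.sum
    intro k _
    rw [smul_eq_C_mul]
    exact (isHomogeneous_X ℂ k).C_mul _
  simpa [one_mul, compMatrix] using hf.aeval _ h1

end BWproof

/-- Unitary invariance of the Bombieri–Weyl Hermitian inner product: for homogeneous
`f, g` of degree `d` and unitary `ν ∈ U(n+1)`, `⟨f∘ν, g∘ν⟩ = ⟨f, g⟩`. -/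
theorem bombieriWeyl_comp_unitary (n d : ℕ) (hd : 1 ≤ d)
    (f g : MvPolynomial (Fin (n + 1)) ℂ)
    (hf : f.IsHomogeneous d) (hg : g.IsHomogeneous d)
    (ν : Matrix (Fin (n + 1)) (Fin (n + 1)) ℂ)
    (hν : ν ∈ Matrix.unitaryGroup (Fin (n + 1)) ℂ) :
    bombieriWeyl (compMatrix ν f) (compMatrix ν g) = bombieriWeyl f g := by
  rw [BWproof.bombieriWeyl_eq_pairB d _ _ (BWproof.compMatrix_isHomogeneous ν d f hf),
    BWproof.bombieriWeyl_eq_pairB d f g hf, BWproof.map_conj_compMatrix,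
    BWproof.pairB_comp ν hν f]
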